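/- For the Lag system R_left with rules blank·blank → blank, blank·L → l, L·blank → blank (acting on control coordinates), any string over Σ × {blank, L, l} containing exactly one pair with control symbol L and all others blank, of length n ≥ 3, with the L-pair not in the first or last position: every iteration is defined (some rule always matches) for the first n−1 iterations, and after them the string contains exactly one non-blank control symbol, which is l. -/

import Mathlib

namespace Stmt18

/-- Control symbols: blank, initiating token `L`, terminating token `l`. -/
inductive Ctl | blank | L | l
deriving DecidableEq

/-- The rule set `R_left`, acting on control coordinates:
`blank·blank → blank`, `blank·L → l`, `L·blank → blank`. -/
def rc : Ctl → Ctl → Option Ctl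
  | .blank, .blank => some .blank
  | .blank, .L => some .l
  | .L, .blank => some .blank
  | _, _ => none

/-- One Lag iteration with context length 2. -/
def step {α : Type*} (r : Ctl → Ctl → Option Ctl) :
    List (α × Ctl) → Option (List (α × Ctl))
  | (x, a) :: (y, b) :: rest => (r a b).map fun c => (y, b) :: rest ++ [(x, c)]
  | _ => none

/-- `k` iterations of the Lag system. -/
def iterL {α : Type*} (r : Ctl → Ctl → Option Ctl) :
    ℕ → List (α × Ctl) → Option (List (α × Ctl))
  | 0, s => some s
  | k + 1, s => (step r s).bind (iterL r k)

end Stmt18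

open Stmt18

namespace Stmt18Aux

/-- Control-level step. -/
def cstep : List Ctl → Option (List Ctl)
  | a :: b :: rest => (rc a b).map fun c => b :: rest ++ [c]
  | _ => none

/-- Control-level iteration. -/
def citer : ℕ → List Ctl → Option (List Ctl)
  | 0, s => some s
  | k + 1, s => (cstep s).bind (citer k)

lemma step_map {α : Type*} (s : List (α × Ctl)) :
    (step rc s).map (List.map Prod.snd) = cstep (s.map Prod.snd) := by
  match s with
  | [] => rfl
  | [p] => rfl
  | (x, a) :: (y, b) :: rest =>
    simp only [step, cstep, List.map_cons]
    cases rc a b <;> simp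

lemma iter_map {α : Type*} (k : ℕ) : ∀ (s : List (α × Ctl)),
    (iterL rc k s).map (List.map Prod.snd) = citer k (s.map Prod.snd) := by
  induction k with
  | zero => intro s; rfl
  | succ k ih =>
    intro s
    rw [iterL, citer, ← step_map]
    cases h : step rc s with
    | none => simp
    | some s1 => simp [ih s1]

lemma citer_add (j k : ℕ) : ∀ s, citer (j + k) s = (citer j s).bind (citer k) := by
  induction j with
  | zero => intro s; simp [citer]
  | succ j ih =>
    intro s
    rw [Nat.succ_add, citer, citer]
    cases cstep s with
    | none => simp
    | some s1 => simp [ih s1]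

lemma phase1 : ∀ (a : ℕ) (t : List Ctl),
    citer (a + 1) (List.replicate (a + 1) Ctl.blank ++ (Ctl.L :: t)) =
      some (Ctl.L :: (t ++ List.replicate a Ctl.blank ++ [Ctl.l])) := by
  intro a
  induction a with
  | zero => intro t; simp [citer, cstep, rc]
  | succ a ih =>
    intro t
    have e1 : List.replicate (a + 2) Ctl.blank ++ (Ctl.L :: t) =
        Ctl.blank :: Ctl.blank :: (List.replicate a Ctl.blank ++ (Ctl.L :: t)) := by
      simp [List.replicate_succ]
    rw [show a + 1 + 1 = (a + 1) + 1 from rfl, citer, e1]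
    have : cstep (Ctl.blank :: Ctl.blank :: (List.replicate a Ctl.blank ++ (Ctl.L :: t))) =
        some (List.replicate (a + 1) Ctl.blank ++ (Ctl.L :: (t ++ [Ctl.blank]))) := by
      simp [cstep, rc, List.replicate_succ]
    rw [this, Option.bind_some, ih (t ++ [Ctl.blank])]
    congr 2
    simp [List.replicate_succ]

lemma phase3 : ∀ (k : ℕ) (m : ℕ) (t : List Ctl),
    citer k (List.replicate (k + m + 1) Ctl.blank ++ (Ctl.l :: t)) =
      some (List.replicate (m + 1) Ctl.blank ++ (Ctl.l :: (t ++ List.replicate k Ctl.blank))) := by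
  intro k
  induction k with
  | zero => intro m t; simp [citer]
  | succ k ih =>
    intro m t
    have e1 : List.replicate (k + 1 + m + 1) Ctl.blank ++ (Ctl.l :: t) =
        Ctl.blank :: Ctl.blank :: (List.replicate (k + m) Ctl.blank ++ (Ctl.l :: t)) := by
      have h : k + 1 + m + 1 = (k + m) + 2 := by omega
      rw [h]; simp [List.replicate_succ]
    rw [show k + 1 = k + 1 from rfl, citer, e1]
    have e2 : cstep (Ctl.blank :: Ctl.blank :: (List.replicate (k + m) Ctl.blank ++ (Ctl.l :: t))) =
        some (List.replicate (k + m + 1) Ctl.blank ++ (Ctl.l :: (t ++ [Ctl.blank]))) := by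
      simp [cstep, rc, List.replicate_succ]
    rw [e2, Option.bind_some, ih m (t ++ [Ctl.blank])]
    congr 3
    simp [List.replicate_succ]

lemma whole (a b : ℕ) :
    citer (a + 1 + 1 + b)
        (List.replicate (a + 1) Ctl.blank ++ (Ctl.L :: List.replicate (b + 1) Ctl.blank)) =
      some (List.replicate (a + 1) Ctl.blank ++
        (Ctl.l :: Ctl.blank :: List.replicate b Ctl.blank)) := by
  rw [show a + 1 + 1 + b = (a + 1) + (b + 1) from by omega, citer_add,
    phase1 a (List.replicate (b + 1) Ctl.blank), Option.bind_some]
  have e1 : Ctl.L :: (List.replicate (b + 1) Ctl.blank ++ List.replicate a Ctl.blank ++ [Ctl.l]) =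
      Ctl.L :: Ctl.blank :: (List.replicate b Ctl.blank ++ List.replicate a Ctl.blank ++ [Ctl.l]) := by
    simp [List.replicate_succ]
  rw [citer, e1]
  have e2 : cstep (Ctl.L :: Ctl.blank ::
        (List.replicate b Ctl.blank ++ List.replicate a Ctl.blank ++ [Ctl.l])) =
      some (List.replicate (b + a + 1) Ctl.blank ++ (Ctl.l :: [Ctl.blank])) := by
    have e3 : List.replicate (b + a + 1) Ctl.blank ++ (Ctl.l :: [Ctl.blank]) =
        Ctl.blank :: (List.replicate b Ctl.blank ++ List.replicate a Ctl.blank ++ [Ctl.l])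
          ++ [Ctl.blank] := by
      rw [show b + a + 1 = 1 + (b + a) from by omega, List.replicate_add, List.replicate_add]
      simp
    simp only [cstep, rc, Option.map_some]
    exact congrArg some e3.symm
  rw [e2, Option.bind_some, phase3 b a [Ctl.blank]]
  rfl

lemma all_blank (t : List Ctl) (h : ∀ j < t.length, t[j]? = some Ctl.blank) :
    t = List.replicate t.length Ctl.blank := by
  rw [List.eq_replicate_iff]
  refine ⟨rfl, fun b hb => ?_⟩
  obtain ⟨j, hj⟩ := List.mem_iff_getElem?.mp hb
  have hjl : j < t.length := (List.getElem?_eq_some_iff.mp hj).1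
  have := h j hjl
  rw [hj] at this
  exact (Option.some_inj.mp this)

lemma shape : ∀ (c : List Ctl) (i : ℕ), i < c.length →
    (∀ j < c.length, GetElem?.getElem? c j = some (if j = i then Ctl.L else Ctl.blank)) →
    c = List.replicate i Ctl.blank ++ Ctl.L :: List.replicate (c.length - i - 1) Ctl.blank := by
  intro c
  induction c with
  | nil => intro i hi; simp at hi
  | cons x t ih =>
    intro i hi h
    cases i with
    | zero =>
      have h0 := h 0 (by simp)
      simp at h0
      have ht : t = List.replicate t.length Ctl.blank := by
        apply all_blank
        intro j hj
        have := h (j + 1) (by simp; omega)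
        simpa using this
      rw [show (x :: t).length - 0 - 1 = t.length from by simp, h0]
      simpa using congrArg (List.cons Ctl.L) ht
    | succ i =>
      have h0 := h 0 (by simp)
      simp at h0
      have hlt : i < t.length := by simp at hi; omega
      have ht := ih i hlt (fun j hj => by
        have := h (j + 1) (by simp; omega)
        simpa using this)
      rw [show (x :: t).length - (i + 1) - 1 = t.length - i - 1 from by simp,
        List.replicate_succ, List.cons_append, h0]
      exact congrArg (List.cons Ctl.blank) ht

end Stmt18Aux

open Stmt18 in
/-- For the Lag system `R_left`: for any string of length `n ≥ 3` over
`Σ × {blank, L, l}` containing exactly one pair with control symbol `L`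
(at position `i`, not first and not last) and all other control symbols blank,
the first `n−1` iterations are all defined, and after them the string contains
exactly one non-blank control symbol, which is `l`. -/
theorem stmt18 {α : Type*} (n : ℕ) (hn : 3 ≤ n)
    (s : List (α × Ctl)) (hlen : s.length = n)
    (i : ℕ) (hi0 : 0 < i) (hin : i < n - 1)
    (hctl : ∀ j < n, (s.map Prod.snd)[j]? =
      some (if j = i then Ctl.L else Ctl.blank)) :
    ∃ s', iterL rc (n - 1) s = some s' ∧
      (s'.map Prod.snd).count Ctl.l = 1 ∧
      ∀ c ∈ s'.map Prod.snd, c = Ctl.blank ∨ c = Ctl.l := by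

  set c := s.map Prod.snd with hc
  have hclen : c.length = n := by simp [hc, hlen]
  have hiN : i < c.length := by omega
  have hcshape := Stmt18Aux.shape c i hiN (by rw [hclen]; exact hctl)
  obtain ⟨a, ha⟩ : ∃ a, i = a + 1 := ⟨i - 1, by omega⟩
  obtain ⟨b, hb⟩ : ∃ b, c.length - i - 1 = b + 1 := ⟨n - i - 2, by omega⟩
  have hn1 : n - 1 = a + 1 + 1 + b := by omega
  have hct : Stmt18Aux.citer (n - 1) c =
      some (List.replicate (a + 1) Ctl.blank ++
        (Ctl.l :: Ctl.blank :: List.replicate b Ctl.blank)) := by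
    rw [hcshape, hb, ha, hn1]
    exact Stmt18Aux.whole a b
  have hm := Stmt18Aux.iter_map (n - 1) s
  rw [← hc, hct] at hm
  obtain ⟨s', hs', hmap⟩ := Option.map_eq_some_iff.mp hm
  refine ⟨s', hs', ?_, ?_⟩
  · rw [hmap]
    simp [List.count_append, List.count_replicate, List.count_cons]
  · rw [hmap]
    intro x hx
    simp [List.mem_append, List.mem_replicate, List.mem_cons] at hx
    rcases hx with h | h | h | h <;> simp [h]
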